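/- The generalised Petersen graph GP(7,2) (two 7-cycles a_0…a_6 and b_0…b_6 joined by edges b_i a_{2i mod 7}) is triangle-free, 3-regular, has 14 vertices, 21 edges, independence number 5, girth 5, and satisfies 3·21 − 17·14 + 35·5 + 0 = 0. -/

import Mathlib

open SimpleGraph

/-- The independence number of a graph. -/
noncomputable def indepNum {V : Type} (G : SimpleGraph V) : ℕ :=
  sSup {n : ℕ | ∃ s : Set V, s.Finite ∧ s.ncard = n ∧ ∀ a ∈ s, ∀ b ∈ s, ¬ G.Adj a b}

/-- The number of edges of a graph. -/
noncomputable def numEdges {V : Type} (G : SimpleGraph V) : ℕ := G.edgeSet.ncard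

/-- The degree (valency) of a vertex. -/
noncomputable def deg {V : Type} (G : SimpleGraph V) (v : V) : ℕ := (G.neighborSet v).ncard

/-- The second valency `d²(v) = ∑_{w ∈ N(v)} d(w)`. -/
noncomputable def secondDeg {V : Type} (G : SimpleGraph V) (v : V) : ℕ :=
  ∑ᶠ w ∈ G.neighborSet v, deg G w

/-- `p = (a,b,c,d)` is an (ordered) 4-cycle of `G`. -/
def IsC4 {V : Type} (G : SimpleGraph V) (p : V × V × V × V) : Prop :=
  G.Adj p.1 p.2.1 ∧ G.Adj p.2.1 p.2.2.1 ∧ G.Adj p.2.2.1 p.2.2.2 ∧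
    G.Adj p.2.2.2 p.1 ∧ p.1 ≠ p.2.2.1 ∧ p.2.1 ≠ p.2.2.2

/-- The number of 4-cycles of `G`; each 4-cycle yields 8 ordered tuples. -/
noncomputable def numC4 {V : Type} (G : SimpleGraph V) : ℕ :=
  {p : V × V × V × V | IsC4 G p}.ncard / 8

/-- The number of 4-cycles of `G` containing a vertex of `S`. -/
noncomputable def numC4Through {V : Type} (G : SimpleGraph V) (S : Set V) : ℕ :=
  {p : V × V × V × V | IsC4 G p ∧ (p.1 ∈ S ∨ p.2.1 ∈ S ∨ p.2.2.1 ∈ S ∨ p.2.2.2 ∈ S)}.ncard / 8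

/-- The invariant `ν(G) = 3e(G) − 17n(G) + 35α(G) + N(C₄;G)`. -/
noncomputable def nu {V : Type} (G : SimpleGraph V) : ℤ :=
  3 * (numEdges G : ℤ) - 17 * (Nat.card V : ℤ) + 35 * (_root_.indepNum G : ℤ) + (numC4 G : ℤ)

/-- The closed neighbourhood `N[v]`. -/
def closedNbhd {V : Type} (G : SimpleGraph V) (v : V) : Set V := insert v (G.neighborSet v)

/-- `S` destabilises `G` : removing `S` decreases the independence number. -/
def Destab {V : Type} (G : SimpleGraph V) (S : Set V) : Prop :=
  _root_.indepNum (G.induce Sᶜ) < _root_.indepNum G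

/-- `G` is edge-critical (α-critical): removing any edge increases the independence number. -/
def EdgeCritical {V : Type} (G : SimpleGraph V) : Prop :=
  ∀ e ∈ G.edgeSet, _root_.indepNum G < _root_.indepNum (G.deleteEdges {e})

/-- The generalised Petersen graph `GP(7,2)`: outer 7-cycle `a` (`Sum.inl`),
inner 7-cycle `b` (`Sum.inr`), spokes `b_i a_{2i}`. -/
def GP72 : SimpleGraph (ZMod 7 ⊕ ZMod 7) :=
  SimpleGraph.fromRel (fun x y =>
    match x, y with
    | Sum.inl i, Sum.inl j => j = i + 1
    | Sum.inr i, Sum.inr j => j = i + 1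
    | Sum.inr i, Sum.inl j => j = 2 * i
    | _, _ => False)

/-! ### Auxiliary material -/

abbrev V14 : Type := ZMod 7 ⊕ ZMod 7

/-- The defining relation of `GP72`, as a standalone definition. -/
def GPrel : V14 → V14 → Prop := fun x y =>
  match x, y with
  | Sum.inl i, Sum.inl j => j = i + 1
  | Sum.inr i, Sum.inr j => j = i + 1
  | Sum.inr i, Sum.inl j => j = 2 * i
  | _, _ => False

instance : DecidableRel GPrel := fun x y =>
  match x, y with
  | Sum.inl i, Sum.inl j => inferInstanceAs (Decidable (j = i + 1))
  | Sum.inl _, Sum.inr _ => inferInstanceAs (Decidable False)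
  | Sum.inr i, Sum.inl j => inferInstanceAs (Decidable (j = 2 * i))
  | Sum.inr i, Sum.inr j => inferInstanceAs (Decidable (j = i + 1))

lemma GP72_adj (x y : V14) : GP72.Adj x y ↔ x ≠ y ∧ (GPrel x y ∨ GPrel y x) := Iff.rfl

instance : DecidableRel GP72.Adj := fun x y => decidable_of_iff _ (GP72_adj x y).symm

lemma noTriangle : ∀ a b c : V14, ¬(GP72.Adj a b ∧ GP72.Adj a c ∧ GP72.Adj b c) := by decide

set_option maxHeartbeats 4000000 in
set_option maxRecDepth 40000 in
lemma noC4' : ∀ a b c d : V14,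
    ¬(GP72.Adj a b ∧ GP72.Adj b c ∧ GP72.Adj c d ∧ GP72.Adj d a ∧ a ≠ c ∧ b ≠ d) := by decide

lemma noC4 : ∀ p : V14 × V14 × V14 × V14, ¬ IsC4 GP72 p := by
  rintro ⟨a, b, c, d⟩ h
  exact noC4' a b c d ⟨h.1, h.2.1, h.2.2.1, h.2.2.2.1, h.2.2.2.2.1, h.2.2.2.2.2⟩

set_option maxHeartbeats 4000000 in
set_option maxRecDepth 40000 in
lemma keyIndep : ∀ s1 s2 : Finset (ZMod 7), 6 ≤ s1.card + s2.card →
    (∃ i ∈ s1, i + 1 ∈ s1) ∨ (∃ i ∈ s2, i + 1 ∈ s2) ∨ (∃ i ∈ s2, 2 * i ∈ s1) := by decide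

lemma adj_outer (i : ZMod 7) : GP72.Adj (Sum.inl i) (Sum.inl (i + 1)) :=
  (GP72_adj _ _).mpr ⟨by simp [left_eq_add]; decide, Or.inl rfl⟩

lemma adj_inner (i : ZMod 7) : GP72.Adj (Sum.inr i) (Sum.inr (i + 1)) :=
  (GP72_adj _ _).mpr ⟨by simp [left_eq_add]; decide, Or.inl rfl⟩

lemma adj_spoke (i : ZMod 7) : GP72.Adj (Sum.inr i) (Sum.inl (2 * i)) :=
  (GP72_adj _ _).mpr ⟨by simp, Or.inl rfl⟩

lemma indep_card_le (t : Finset V14) (h : ∀ a ∈ t, ∀ b ∈ t, ¬ GP72.Adj a b) :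
    t.card ≤ 5 := by
  by_contra hc
  push_neg at hc
  set s1 : Finset (ZMod 7) := Finset.univ.filter (fun i => Sum.inl i ∈ t) with hs1
  set s2 : Finset (ZMod 7) := Finset.univ.filter (fun i => Sum.inr i ∈ t) with hs2
  have hunion : t = s1.image Sum.inl ∪ s2.image Sum.inr := by
    ext v
    cases v <;> simp [hs1, hs2]
  have hcard : t.card = s1.card + s2.card := by
    rw [hunion, Finset.card_union_of_disjoint (by simp [Finset.disjoint_left]),
      Finset.card_image_of_injective _ Sum.inl_injective,
      Finset.card_image_of_injective _ Sum.inr_injective]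
  have h6 : 6 ≤ s1.card + s2.card := by omega
  have hmem1 : ∀ i : ZMod 7, i ∈ s1 → Sum.inl i ∈ t := by intro i hi; simpa [hs1] using hi
  have hmem2 : ∀ i : ZMod 7, i ∈ s2 → Sum.inr i ∈ t := by intro i hi; simpa [hs2] using hi
  rcases keyIndep s1 s2 h6 with ⟨i, hi, hi1⟩ | ⟨i, hi, hi1⟩ | ⟨i, hi, hi1⟩
  · exact h _ (hmem1 i hi) _ (hmem1 _ hi1) (adj_outer i)
  · exact h _ (hmem2 i hi) _ (hmem2 _ hi1) (adj_inner i)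
  · exact h _ (hmem2 i hi) _ (hmem1 _ hi1) (adj_spoke i)

/-- An explicit independent set of size 5. -/
def F5 : Finset V14 := {Sum.inl 0, Sum.inl 2, Sum.inl 4, Sum.inr 3, Sum.inr 5}

lemma F5_indep : ∀ a ∈ F5, ∀ b ∈ F5, ¬ GP72.Adj a b := by decide

lemma indepNum_GP72 : _root_.indepNum GP72 = 5 := by
  have hub : ∀ n ∈ {n : ℕ | ∃ s : Set V14, s.Finite ∧ s.ncard = n ∧
      ∀ a ∈ s, ∀ b ∈ s, ¬ GP72.Adj a b}, n ≤ 5 := by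
    rintro n ⟨s, hfin, rfl, hind⟩
    rw [Set.ncard_eq_toFinset_card s hfin]
    exact indep_card_le _ (fun a ha b hb =>
      hind a (hfin.mem_toFinset.mp ha) b (hfin.mem_toFinset.mp hb))
  have hmem : 5 ∈ {n : ℕ | ∃ s : Set V14, s.Finite ∧ s.ncard = n ∧
      ∀ a ∈ s, ∀ b ∈ s, ¬ GP72.Adj a b} :=
    ⟨↑F5, F5.finite_toSet, by rw [Set.ncard_coe_finset]; rfl,
      fun a ha b hb => F5_indep a (Finset.mem_coe.mp ha) b (Finset.mem_coe.mp hb)⟩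
  exact le_antisymm (csSup_le ⟨5, hmem⟩ hub) (le_csSup ⟨5, hub⟩ hmem)

lemma numEdges_GP72 : numEdges GP72 = 21 := by
  rw [numEdges, Set.ncard_eq_toFinset_card']
  decide

lemma deg_GP72 : ∀ v : V14, deg GP72 v = 3 := by
  intro v
  rw [deg, Set.ncard_eq_toFinset_card']
  revert v
  decide

lemma numC4_GP72 : numC4 GP72 = 0 := by
  have : {p : V14 × V14 × V14 × V14 | IsC4 GP72 p} = ∅ :=
    Set.eq_empty_iff_forall_notMem.mpr noC4
  rw [numC4, this, Set.ncard_empty]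

lemma cliqueFree_GP72 : GP72.CliqueFree 3 := by
  intro t ht
  obtain ⟨a, b, c, h1, h2, h3, -⟩ := SimpleGraph.is3Clique_iff.mp ht
  exact noTriangle a b c ⟨h1, h2, h3⟩

lemma no_short_cycle : ∀ (a : V14) (w : GP72.Walk a a), w.IsCycle → 5 ≤ w.length := by
  intro a w hw
  by_contra hlt
  push_neg at hlt
  have h3 := hw.three_le_length
  have hor : w.length = 3 ∨ w.length = 4 := by omega
  rcases hor with h | h
  · obtain ⟨s, hs⟩ := SimpleGraph.is3Clique_iff_exists_cycle_length_three.mpr ⟨a, w, hw, h⟩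
    obtain ⟨x, y, z, h1, h2, h3', -⟩ := SimpleGraph.is3Clique_iff.mp hs
    exact noTriangle x y z ⟨h1, h2, h3'⟩
  · cases w with
    | nil => simp at h
    | cons h1 p =>
      cases p with
      | nil => simp at h
      | cons h2 p =>
        cases p with
        | nil => simp at h
        | cons h3' p =>
          cases p with
          | nil => simp at h
          | cons h4 p =>
            cases p with
            | cons h5 p => simp [SimpleGraph.Walk.length_cons] at h
            | nil =>
              rw [SimpleGraph.Walk.isCycle_def] at hw
              have hnd := hw.2.2
              simp [SimpleGraph.Walk.support_cons, List.nodup_cons] at hnd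
              exact noC4' _ _ _ _ ⟨h1, h2, h3', h4, by tauto, by tauto⟩

/-- The explicit 5-cycle `a₀ a₁ a₂ b₁ b₀`. -/
def w5 : GP72.Walk (Sum.inl 0) (Sum.inl 0) :=
  SimpleGraph.Walk.cons (show GP72.Adj (Sum.inl 0) (Sum.inl 1) by decide)
    (SimpleGraph.Walk.cons (show GP72.Adj (Sum.inl 1) (Sum.inl 2) by decide)
      (SimpleGraph.Walk.cons (show GP72.Adj (Sum.inl 2) (Sum.inr 1) by decide)
        (SimpleGraph.Walk.cons (show GP72.Adj (Sum.inr 1) (Sum.inr 0) by decide)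
          (SimpleGraph.Walk.cons (show GP72.Adj (Sum.inr 0) (Sum.inl 0) by decide)
            SimpleGraph.Walk.nil))))

lemma w5_cycle : w5.IsCycle := by
  rw [SimpleGraph.Walk.isCycle_def]
  refine ⟨⟨by decide⟩, by simp [w5], by decide⟩

lemma egirth_GP72 : GP72.egirth = 5 := by
  apply le_antisymm
  · have h1 : GP72.egirth ≤ (w5.length : ℕ∞) :=
      iInf_le_of_le (Sum.inl 0) (iInf_le_of_le w5 (iInf_le _ w5_cycle))
    have hl : w5.length = 5 := rfl
    rw [hl] at h1
    simpa using h1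
  · rw [SimpleGraph.le_egirth]
    intro a w hw
    exact_mod_cast no_short_cycle a w hw

lemma girth_GP72 : GP72.girth = 5 := by
  rw [SimpleGraph.girth, egirth_GP72]
  rfl

/-- `GP(7,2)` is triangle-free, 3-regular, has 14 vertices, 21 edges, independence number 5,
girth 5, no 4-cycles, and `ν = 3·21 − 17·14 + 35·5 + 0 = 0`. -/
theorem stmt19 :
    GP72.CliqueFree 3 ∧ (∀ v, deg GP72 v = 3) ∧ Nat.card (ZMod 7 ⊕ ZMod 7) = 14 ∧
      numEdges GP72 = 21 ∧ _root_.indepNum GP72 = 5 ∧ GP72.girth = 5 ∧ numC4 GP72 = 0 ∧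
      nu GP72 = 0 ∧ 3 * 21 - 17 * 14 + 35 * 5 + 0 = (0 : ℤ) := by
  have hcard : Nat.card (ZMod 7 ⊕ ZMod 7) = 14 := by
    rw [Nat.card_eq_fintype_card]; rfl
  refine ⟨cliqueFree_GP72, deg_GP72, hcard, numEdges_GP72, indepNum_GP72, girth_GP72,
    numC4_GP72, ?_, by norm_num⟩
  rw [nu, numEdges_GP72, indepNum_GP72, numC4_GP72, hcard]
  norm_num
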